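/- arXiv:1803.05332 — 5 statements merged into one kernel-verified Lean document; each statement's English description precedes it below -/
import Mathlib

section
/- Every polynomial u⁰ of degree ≤ 2 composed with the characteristic flow of a constant velocity, u(x,t) = u⁰(x − Vt), is reproduced exactly (with zero truncation error) by the semi-implicit κ-scheme U_i^{n+1} + τV(∂ₓ⁻U_i^{n+1} − ½∂ₓᵏU_{i−1}^{n+1}) = U_i^n − ½τV ∂ₓᵏU_i^n for any κ, any h > 0, and any τ > 0, assuming V > 0. -/
/-- Quadratic exact solutions u(x,t) = u⁰(x − Vt) are reproduced exactly by the
semi-implicit κ-scheme for any κ, h > 0, τ > 0, V > 0. -/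
theorem stmt6 (a b c V h τ κ : ℝ) (hV : 0 < V) (hh : 0 < h) (hτ : 0 < τ)
    (u0 : ℝ → ℝ) (hu0 : ∀ x, u0 x = a * x ^ 2 + b * x + c)
    (U : ℤ → ℕ → ℝ) (hU : ∀ i n, U i n = u0 ((i : ℝ) * h - V * ((n : ℝ) * τ)))
    (Dκ : ℤ → ℕ → ℝ)
    (hDκ : ∀ i n, Dκ i n =
      ((1 - κ) * (U i n - U (i - 1) n) + (1 + κ) * (U (i + 1) n - U i n)) / (2 * h)) :
    ∀ (i : ℤ) (n : ℕ),
      U i (n + 1) + τ * V * ((U i (n + 1) - U (i - 1) (n + 1)) / h - (1 / 2) * Dκ (i - 1) (n + 1)) =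
        U i n - (1 / 2) * τ * V * Dκ i n := by
  intro i n
  simp only [hDκ, hU, hu0]
  push_cast
  field_simp
  ring
end

section
/- For constant velocity V > 0 with Courant number C = τV/h, if κ = (1 − C)/3 then the semi-implicit κ-scheme reproduces exactly every solution u(x,t) = u⁰(x − Vt) with u⁰ a cubic polynomial, i.e., the truncation error vanishes for cubic data (third-order accuracy). -/
/-- With κ = (1 − C)/3, C = τV/h, the semi-implicit κ-scheme reproduces exactly
every cubic exact solution u(x,t) = u⁰(x − Vt) (third-order accuracy). -/
theorem stmt7 (a b c d V h τ : ℝ) (hV : 0 < V) (hh : 0 < h) (hτ : 0 < τ)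
    (C κ : ℝ) (hC : C = τ * V / h) (hκ : κ = (1 - C) / 3)
    (u0 : ℝ → ℝ) (hu0 : ∀ x, u0 x = a * x ^ 3 + b * x ^ 2 + c * x + d)
    (U : ℤ → ℕ → ℝ) (hU : ∀ i n, U i n = u0 ((i : ℝ) * h - V * ((n : ℝ) * τ)))
    (Dκ : ℤ → ℕ → ℝ)
    (hDκ : ∀ i n, Dκ i n =
      ((1 - κ) * (U i n - U (i - 1) n) + (1 + κ) * (U (i + 1) n - U i n)) / (2 * h)) :
    ∀ (i : ℤ) (n : ℕ),
      U i (n + 1) + τ * V * ((U i (n + 1) - U (i - 1) (n + 1)) / h - (1 / 2) * Dκ (i - 1) (n + 1)) =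
        U i n - (1 / 2) * τ * V * Dκ i n := by
  intro i n
  subst hC hκ
  simp only [hDκ, hU, hu0]
  push_cast
  field_simp
  ring
end

section
/- For the semi-implicit scheme with κ = sign(V) (scheme (20)), the von Neumann amplification factor S(θ) = (1 − (|C|/2)(e^{iθ·sign(C)} − 1)) / (1 + (|C|/2)(1 − e^{−iθ·sign(C)})) satisfies |S(θ)| = 1 for every θ ∈ ℝ and every Courant number C ∈ ℝ. -/
open Complex

/-- The amplification factor of the semi-implicit scheme with κ = sign(V) has
modulus exactly 1 for every θ and every Courant number C. -/
theorem stmt8 (C θ : ℝ) :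
    ‖((1 - (|C| / 2 : ℝ) * (Complex.exp (Complex.I * θ * Real.sign C) - 1)) /
          (1 + (|C| / 2 : ℝ) * (1 - Complex.exp (-(Complex.I * θ * Real.sign C)))))‖ = 1 := by
  set a : ℝ := |C| / 2 with ha
  have ha0 : 0 ≤ a := by positivity
  set w : ℂ := Complex.I * θ * Real.sign C with hw
  have hconjw : starRingEnd ℂ w = -w := by
    simp [hw, Complex.conj_ofReal]
  have hz : Complex.exp (-w) = starRingEnd ℂ (Complex.exp w) := by
    rw [← Complex.exp_conj, hconjw]
  have key : (1 + (a : ℂ) * (1 - Complex.exp (-w)))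
      = starRingEnd ℂ (1 - (a : ℂ) * (Complex.exp w - 1)) := by
    rw [hz]
    simp only [map_sub, map_mul, map_one, Complex.conj_ofReal]
    ring
  have habsz : ‖Complex.exp w‖ = 1 := by
    rw [hw]
    rw [Complex.norm_exp]
    have : (Complex.I * θ * Real.sign C).re = 0 := by
      simp [Complex.mul_re, Complex.mul_im]
    rw [this, Real.exp_zero]
  have hnum : ‖1 - (a : ℂ) * (Complex.exp w - 1)‖ ≠ 0 := by
    intro h
    have h0 : (1 - (a : ℂ) * (Complex.exp w - 1)) = 0 := by
      exact norm_eq_zero.1 h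
    have h1 : ((1 + a : ℝ) : ℂ) = (a : ℂ) * Complex.exp w := by
      push_cast
      linear_combination h0
    have h2 : |1 + a| = a := by
      have := congrArg (‖·‖) h1
      rwa [Complex.norm_real, Real.norm_eq_abs, norm_mul, Complex.norm_real, Real.norm_eq_abs, habsz, mul_one,
        _root_.abs_of_nonneg ha0] at this
    rw [_root_.abs_of_nonneg (by linarith)] at h2
    linarith
  rw [norm_div, key, Complex.norm_conj, div_self hnum]
end

section
/- For the semi-implicit κ-scheme with V > 0 and κ ≤ 1, the von Neumann amplification factor S(θ) = (1 − (C/2)g(θ)) / (1 + C(1 − e^{−iθ}) − (C/2)e^{−iθ}g(θ)), where g(θ) = ((1−κ)(1 − e^{−iθ}) + (1+κ)(e^{iθ} − 1))/2, satisfies |S(θ)| ≤ 1 for all θ ∈ ℝ and all Courant numbers C = τV/h > 0 (unconditional stability). -/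
open Complex

private lemma aux_ineq (C κ c s : ℝ) (hC : 0 < C) (hκ : κ ≤ 1)
    (hc1 : -1 ≤ c) (hc2 : c ≤ 1) (hcs : s ^ 2 = 1 - c ^ 2) :
    (1 - C / 2 * κ * (c - 1)) ^ 2 + (C / 2 * s) ^ 2 ≤
      (1 + C * (1 - c) - C / 2 * (κ * c * (c - 1) + s ^ 2)) ^ 2 +
        (C * s - C / 2 * s * (c - κ * (c - 1))) ^ 2 := by
  have key : ((1 + C * (1 - c) - C / 2 * (κ * c * (c - 1) + s ^ 2)) ^ 2 +
        (C * s - C / 2 * s * (c - κ * (c - 1))) ^ 2) -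
      ((1 - C / 2 * κ * (c - 1)) ^ 2 + (C / 2 * s) ^ 2) =
      C / 2 * (1 - κ) * (1 - c) ^ 2 *
        (2 + C / 2 * ((1 - c) ^ 2 + (1 + c) * (3 - c))) := by
    linear_combination (C ^ 2 / 4 * (s ^ 2 + 1 - c ^ 2)
      - (1 + C * (1 - c) - C / 2 * (κ * c * (c - 1))) * C
      + (C / 2 * (2 - c + κ * (c - 1))) ^ 2 - C ^ 2 / 4) * hcs
  have hT : 0 ≤ C / 2 * (1 - κ) * (1 - c) ^ 2 *
      (2 + C / 2 * ((1 - c) ^ 2 + (1 + c) * (3 - c))) := by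
    apply mul_nonneg
    · apply mul_nonneg (mul_nonneg (by linarith) (by linarith)) (sq_nonneg _)
    · nlinarith [sq_nonneg (1 - c), mul_nonneg (by linarith : (0:ℝ) ≤ 1 + c)
        (by linarith : (0:ℝ) ≤ 3 - c)]
  linarith

private lemma aux_abs (C κ c s : ℝ) (hC : 0 < C) (hκ : κ ≤ 1)
    (hc1 : -1 ≤ c) (hc2 : c ≤ 1) (hcs : s ^ 2 = 1 - c ^ 2) :
    ‖((1 - (C / 2 : ℝ) *
            (((1 - κ) * (1 - ((c : ℂ) - (s : ℂ) * Complex.I)) +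
               (1 + κ) * (((c : ℂ) + (s : ℂ) * Complex.I) - 1)) / 2)) /
          (1 + (C : ℝ) * (1 - ((c : ℂ) - (s : ℂ) * Complex.I)) -
            (C / 2 : ℝ) * ((c : ℂ) - (s : ℂ) * Complex.I) *
              (((1 - κ) * (1 - ((c : ℂ) - (s : ℂ) * Complex.I)) +
                 (1 + κ) * (((c : ℂ) + (s : ℂ) * Complex.I) - 1)) / 2)))‖ ≤ 1 := by
  rw [norm_div]
  apply div_le_one_of_le₀
  · rw [Complex.norm_def, Complex.norm_def]
    apply Real.sqrt_le_sqrt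
    have h := aux_ineq C κ c s hC hκ hc1 hc2 hcs
    simp only [Complex.normSq_apply, Complex.sub_re, Complex.sub_im, Complex.add_re,
      Complex.add_im, Complex.mul_re, Complex.mul_im, Complex.one_re, Complex.one_im,
      Complex.ofReal_re, Complex.ofReal_im, Complex.I_re, Complex.I_im,
      Complex.div_ofNat_re, Complex.div_ofNat_im]
    ring_nf
    ring_nf at h
    linarith
  · exact norm_nonneg _

/-- Unconditional von Neumann stability of the semi-implicit κ-scheme for V > 0 and κ ≤ 1:
|S(θ)| ≤ 1 for all θ and all Courant numbers C > 0. -/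
theorem stmt9 (κ : ℝ) (hκ : κ ≤ 1) :
    ∀ (C θ : ℝ), 0 < C →
      ‖((1 - (C / 2 : ℝ) *
              (((1 - κ) * (1 - Complex.exp (-(Complex.I * θ))) +
                 (1 + κ) * (Complex.exp (Complex.I * θ) - 1)) / 2)) /
            (1 + (C : ℝ) * (1 - Complex.exp (-(Complex.I * θ))) -
              (C / 2 : ℝ) * Complex.exp (-(Complex.I * θ)) *
                (((1 - κ) * (1 - Complex.exp (-(Complex.I * θ))) +
                   (1 + κ) * (Complex.exp (Complex.I * θ) - 1)) / 2)))‖ ≤ 1 := by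
  intro C θ hC
  have he1 : Complex.exp (Complex.I * θ) =
      ((Real.cos θ : ℂ) + (Real.sin θ : ℂ) * Complex.I) := by
    rw [mul_comm, Complex.exp_mul_I, Complex.ofReal_cos, Complex.ofReal_sin]
  have he2 : Complex.exp (-(Complex.I * θ)) =
      ((Real.cos θ : ℂ) - (Real.sin θ : ℂ) * Complex.I) := by
    have h : -(Complex.I * (θ : ℂ)) = ((-θ : ℝ) : ℂ) * Complex.I := by
      push_cast; ring
    rw [h, Complex.exp_mul_I]
    push_cast [Complex.cos_neg, Complex.sin_neg]
    ring
  rw [he1, he2]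
  exact aux_abs C κ (Real.cos θ) (Real.sin θ) hC hκ (Real.neg_one_le_cos θ)
    (Real.cos_le_one θ) (by nlinarith [Real.sin_sq_add_cos_sq θ])
end

section
/- For the semi-implicit scheme (21) with κ = 0 and V > 0, the amplification factor S(θ) = (1 − (C/4)(e^{iθ} − e^{−iθ})) / (1 + (C/4)(3 − 4e^{−iθ} + e^{−2iθ})) satisfies |S(θ)| ≤ 1 for all θ ∈ ℝ and all C ≥ 0. -/
open Complex

/-- Von Neumann stability of the semi-implicit scheme (21) (κ = 0, V > 0):
|S(θ)| ≤ 1 for all θ ∈ ℝ and all C ≥ 0. -/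
theorem stmt10 :
    ∀ (C θ : ℝ), 0 ≤ C →
      ‖
          ((1 - (C / 4 : ℝ) * (Complex.exp (Complex.I * θ) - Complex.exp (-(Complex.I * θ)))) /
            (1 + (C / 4 : ℝ) *
              (3 - 4 * Complex.exp (-(Complex.I * θ)) + Complex.exp (-(2 * Complex.I * θ)))))‖ ≤ 1 := by
  intro C θ hC
  rw [norm_div]
  apply div_le_one_of_le₀ _ (norm_nonneg _)
  rw [Complex.norm_def, Complex.norm_def]
  apply Real.sqrt_le_sqrt
  have e1 : Complex.exp (Complex.I * θ) = Real.cos θ + Real.sin θ * Complex.I := by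
    rw [mul_comm, Complex.exp_mul_I]; push_cast; ring
  have e2 : Complex.exp (-(Complex.I * θ)) = Real.cos θ - Real.sin θ * Complex.I := by
    have : -(Complex.I * θ) = ((-θ : ℝ) : ℂ) * Complex.I := by push_cast; ring
    rw [this, Complex.exp_mul_I]; push_cast; simp [Real.cos_neg, Real.sin_neg]; ring
  have e3 : Complex.exp (-(2 * Complex.I * θ)) =
      Real.cos (2 * θ) - Real.sin (2 * θ) * Complex.I := by
    have : -(2 * Complex.I * θ) = ((-(2 * θ) : ℝ) : ℂ) * Complex.I := by push_cast; ring
    rw [this, Complex.exp_mul_I]; push_cast; simp [Real.cos_neg, Real.sin_neg]; ring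
  rw [e1, e2, e3, Real.cos_two_mul, Real.sin_two_mul]
  set s := Real.sin θ
  set c := Real.cos θ
  have hsc : s ^ 2 + c ^ 2 = 1 := Real.sin_sq_add_cos_sq θ
  have hc1 : c ≤ 1 := Real.cos_le_one θ
  simp only [Complex.normSq_apply]
  simp [Complex.add_re, Complex.add_im, Complex.sub_re, Complex.sub_im, Complex.mul_re,
    Complex.mul_im, Complex.ofReal_re, Complex.ofReal_im, Complex.I_re, Complex.I_im, ← Complex.ofReal_pow]
  nlinarith [sq_nonneg (1 - c), sq_nonneg (C * (1 - c) ^ 2), sq_nonneg s,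
    sq_nonneg (C * s), mul_nonneg hC (sq_nonneg (1 - c)), sq_nonneg (C * s * (1 - c))]
end
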